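/- Let ī = (i_k)_{k∈K} be a sequence in the index set I of a finite simply-laced root system, and let a, k ∈ K satisfy a⁻ < k < a⁺, where a⁻ (resp. a⁺) is the largest index < a (resp. smallest index > a) with the same letter i_a (taken −∞/+∞ if none). Set w_{≤m} = s_{i_l}⋯s_{i_m} for a fixed l ≤ all relevant indices, and β_k = s_{i_l}⋯s_{i_{k-1}}(α_{i_k}). Then (β_k, w_{≤a⁻}ϖ_{i_a} + w_{≤a}ϖ_{i_a}) equals −(β_k, β_a) if a⁻ < k < a, equals (β_k, β_a) if a < k < a⁺, and equals 0 if k = a. (If a⁻ = −∞, interpret w_{≤a⁻}ϖ_{i_a} = ϖ_{i_a} acting by the prefix up to l−1, i.e. the identity.) -/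

import Mathlib

noncomputable section

/-- The reflection `v ↦ v - B(v,a)·a` associated with a vector `a` (of squared length `2`)
and a symmetric bilinear form `B`. -/
def refl' {V : Type*} [AddCommGroup V] [Module ℝ V]
    (Bf : V →ₗ[ℝ] V →ₗ[ℝ] ℝ) (a : V) : Module.End ℝ V :=
  LinearMap.id - (Bf.flip a).smulRight a

/-- The list of integers `[l, l+1, …, k-1]` (empty if `k ≤ l`). -/
def iList (l k : ℤ) : List ℤ := (List.range (k - l).toNat).map (fun n => l + n)

/-- The product of reflections `s_{i_l} s_{i_{l+1}} ⋯ s_{i_{k-1}}`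
(applied as an endomorphism, `s_{i_{k-1}}` acting first). -/
def wprod {I V : Type*} [DecidableEq I] [AddCommGroup V] [Module ℝ V]
    (Bf : V →ₗ[ℝ] V →ₗ[ℝ] ℝ) (α : I → V) (ii : ℤ → I) (l k : ℤ) : Module.End ℝ V :=
  ((iList l k).map (fun m => refl' Bf (α (ii m)))).prod

/-- The root `β^ī_k = s_{i_l}⋯s_{i_{k-1}}(α_{i_k})`. -/
def betaRoot {I V : Type*} [DecidableEq I] [AddCommGroup V] [Module ℝ V]
    (Bf : V →ₗ[ℝ] V →ₗ[ℝ] ℝ) (α : I → V) (ii : ℤ → I) (l k : ℤ) : V :=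
  wprod Bf α ii l k (α (ii k))

section aux
variable {I V : Type*} [DecidableEq I] [AddCommGroup V] [Module ℝ V]
    (Bf : V →ₗ[ℝ] V →ₗ[ℝ] ℝ)

lemma refl'_apply (a v : V) : refl' Bf a v = v - Bf v a • a := by
  simp [refl']

lemma refl'_inv (hsymm : ∀ u v : V, Bf u v = Bf v u) (a : V) (ha : Bf a a = 2)
    (u v : V) : Bf (refl' Bf a u) (refl' Bf a v) = Bf u v := by
  simp only [refl'_apply, map_sub, map_smul, LinearMap.sub_apply, LinearMap.smul_apply,
    smul_eq_mul]
  rw [ha, hsymm a v]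
  ring

lemma mem_iList {l k m : ℤ} : m ∈ iList l k ↔ l ≤ m ∧ m < k := by
  simp only [iList, List.pure_def, List.bind_eq_flatMap, List.mem_map, List.mem_flatMap,
    List.mem_range, List.mem_singleton]
  constructor
  · rintro ⟨n, ⟨p, hp, rfl⟩, rfl⟩
    omega
  · intro h
    exact ⟨(m - l), ⟨(m - l).toNat, by omega, by omega⟩, by omega⟩

lemma iList_nil (l : ℤ) : iList l l = [] := by simp [iList]

lemma iList_succ (l k : ℤ) (h : l ≤ k) : iList l (k + 1) = iList l k ++ [k] := by
  unfold iList
  have h3 : (k + 1 - l).toNat = (k - l).toNat + 1 := by omega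
  rw [h3, List.range_succ]
  simp only [List.pure_def, List.bind_eq_flatMap, List.flatMap_append, List.map_append]
  congr 1
  simp
  omega

lemma iList_split (l m k : ℤ) (h1 : l ≤ m) (h2 : m ≤ k) :
    iList l k = iList l m ++ iList m k := by
  obtain ⟨n, rfl⟩ : ∃ n : ℕ, k = m + n := ⟨(k - m).toNat, by omega⟩
  induction n with
  | zero => simp [iList_nil]
  | succ p ih =>
      have hp : m ≤ m + p := by omega
      have e1 : (m : ℤ) + (p + 1 : ℕ) = (m + p) + 1 := by push_cast; ring
      rw [e1, iList_succ l (m + p) (by omega), iList_succ m (m + p) hp,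
        ih (by omega)]
      simp

variable (α : I → V) (ii : ℤ → I)

/-- Generic list product of reflections. -/
def lprod (L : List ℤ) : Module.End ℝ V :=
  (L.map (fun m => refl' Bf (α (ii m)))).prod

lemma wprod_eq_lprod (l k : ℤ) : wprod Bf α ii l k = lprod Bf α ii (iList l k) := rfl

lemma lprod_nil : lprod Bf α ii [] = LinearMap.id := by simp [lprod]; rfl

lemma lprod_cons (m : ℤ) (L : List ℤ) (v : V) :
    lprod Bf α ii (m :: L) v = refl' Bf (α (ii m)) (lprod Bf α ii L v) := by
  simp [lprod, List.prod_cons, Module.End.mul_apply]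

lemma lprod_append (L₁ L₂ : List ℤ) (v : V) :
    lprod Bf α ii (L₁ ++ L₂) v = lprod Bf α ii L₁ (lprod Bf α ii L₂ v) := by
  simp [lprod, List.map_append, List.prod_append, Module.End.mul_apply]

lemma lprod_inv (hsymm : ∀ u v : V, Bf u v = Bf v u) (hnorm : ∀ i, Bf (α i) (α i) = 2)
    (L : List ℤ) (u v : V) :
    Bf (lprod Bf α ii L u) (lprod Bf α ii L v) = Bf u v := by
  induction L generalizing u v with
  | nil => simp [lprod]
  | cons m L ih =>
      rw [lprod_cons, lprod_cons, refl'_inv Bf hsymm _ (hnorm _), ih]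

lemma lprod_fix (L : List ℤ) (w : V) (hw : ∀ m ∈ L, Bf w (α (ii m)) = 0) :
    lprod Bf α ii L w = w := by
  induction L with
  | nil => simp [lprod]
  | cons m L ih =>
      rw [lprod_cons, ih (fun p hp => hw p (List.mem_cons_of_mem m hp)),
        refl'_apply, hw m List.mem_cons_self, zero_smul, sub_zero]

lemma lprod_pair (L : List ℤ) (x w : V) (hw : ∀ m ∈ L, Bf (α (ii m)) w = 0) :
    Bf (lprod Bf α ii L x) w = Bf x w := by
  induction L with
  | nil => simp [lprod]
  | cons m L ih =>
      rw [lprod_cons, refl'_apply, map_sub, map_smul, LinearMap.sub_apply,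
        LinearMap.smul_apply, smul_eq_mul, hw m List.mem_cons_self, mul_zero,
        sub_zero, ih (fun p hp => hw p (List.mem_cons_of_mem m hp))]

end aux

theorem beta_pairing_with_weights
    {I V : Type*} [DecidableEq I] [AddCommGroup V] [Module ℝ V]
    (Bf : V →ₗ[ℝ] V →ₗ[ℝ] ℝ)
    (hsymm : ∀ u v : V, Bf u v = Bf v u)
    (α : I → V) (hnorm : ∀ i, Bf (α i) (α i) = 2)
    (ϖ : I → V) (hϖ : ∀ i j : I, Bf (α j) (ϖ i) = if i = j then 1 else 0)
    (ii : ℤ → I) (l : ℤ) :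
    ∀ a k aminus aplus : ℤ,
      l ≤ a → l ≤ k →
      l - 1 ≤ aminus → aminus < a →
      (aminus = l - 1 ∨ ii aminus = ii a) →
      (∀ m : ℤ, aminus < m → m < a → ii m ≠ ii a) →
      a < aplus →
      (∀ m : ℤ, a < m → m < aplus → ii m ≠ ii a) →
      aminus < k → k < aplus →
      Bf (betaRoot Bf α ii l k)
        (wprod Bf α ii l (aminus + 1) (ϖ (ii a)) + wprod Bf α ii l (a + 1) (ϖ (ii a)))
      = if k < a then -(Bf (betaRoot Bf α ii l k) (betaRoot Bf α ii l a))
        else if a < k then Bf (betaRoot Bf α ii l k) (betaRoot Bf α ii l a)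
        else 0 := by
  intro a k aminus aplus ha hk haminus1 haminus2 _hprev hgap1 haplus hgap2 hk1 hk2
  set w := ϖ (ii a) with hw
  -- orthogonality of the intermediate simple roots with the weight
  have horth : ∀ m : ℤ, aminus < m → m < aplus → m ≠ a → Bf (α (ii m)) w = 0 := by
    intro m h1 h2 h3
    have hne : ii m ≠ ii a := by
      rcases lt_or_gt_of_ne h3 with h | h
      · exact hgap1 m h1 h
      · exact hgap2 m h h2
    rw [hw, hϖ, if_neg (fun h => hne h.symm)]
  -- Step 1 : w_{≤ a⁻} ϖ = w_{≤ a-1} ϖ  (no occurrences in between)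
  have hA : wprod Bf α ii l a w = wprod Bf α ii l (aminus + 1) w := by
    rw [wprod_eq_lprod, wprod_eq_lprod,
      iList_split l (aminus + 1) a (by omega) (by omega), lprod_append]
    congr 1
    apply lprod_fix
    intro m hm
    rw [mem_iList] at hm
    rw [hsymm]
    exact horth m (by omega) (by omega) (by omega)
  -- Step 2 : w_{≤ a} ϖ = w_{≤ a-1} ϖ - β_a
  have hB : wprod Bf α ii l (a + 1) w = wprod Bf α ii l a w - betaRoot Bf α ii l a := by
    rw [wprod_eq_lprod, wprod_eq_lprod, iList_succ l a ha, lprod_append]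
    have h1 : lprod Bf α ii [a] w = w - α (ii a) := by
      rw [lprod_cons]
      show refl' Bf (α (ii a)) (lprod Bf α ii [] w) = _
      rw [lprod_nil]
      show refl' Bf (α (ii a)) w = _
      rw [refl'_apply, hsymm, hw, hϖ, if_pos rfl, one_smul]
    rw [h1, map_sub]
    rfl
  rw [← hA, hB]
  have key : ∀ u : V, Bf u (wprod Bf α ii l a w + (wprod Bf α ii l a w - betaRoot Bf α ii l a))
      = 2 * Bf u (wprod Bf α ii l a w) - Bf u (betaRoot Bf α ii l a) := by
    intro u
    simp only [map_add, map_sub]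
    ring
  rw [key]
  rcases lt_trichotomy k a with h | h | h
  · -- case k < a
    rw [if_pos h]
    have h0 : Bf (betaRoot Bf α ii l k) (wprod Bf α ii l a w) = 0 := by
      rw [betaRoot, wprod_eq_lprod, wprod_eq_lprod,
        iList_split l k a hk (le_of_lt h), lprod_append,
        lprod_inv Bf α ii hsymm hnorm]
      have hfix : lprod Bf α ii (iList k a) w = w := by
        apply lprod_fix
        intro m hm
        rw [mem_iList] at hm
        rw [hsymm]
        exact horth m (by omega) (by omega) (by omega)
      rw [hfix]
      exact horth k hk1 hk2 (ne_of_lt h)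
    rw [h0]
    ring
  · -- case k = a
    subst h
    rw [if_neg (lt_irrefl k), if_neg (lt_irrefl k)]
    have h1 : Bf (betaRoot Bf α ii l k) (wprod Bf α ii l k w) = 1 := by
      rw [betaRoot, wprod_eq_lprod, lprod_inv Bf α ii hsymm hnorm, hw, hϖ, if_pos rfl]
    have h2 : Bf (betaRoot Bf α ii l k) (betaRoot Bf α ii l k) = 2 := by
      rw [betaRoot, wprod_eq_lprod, lprod_inv Bf α ii hsymm hnorm, hnorm]
    rw [h1, h2]
    ring
  · -- case a < k
    rw [if_neg (not_lt_of_gt h), if_pos h]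
    set v := lprod Bf α ii (iList (a + 1) k) (α (ii k)) with hv
    have hvw : Bf v w = 0 := by
      rw [hv, lprod_pair]
      · exact horth k (by omega) hk2 (ne_of_gt h)
      · intro m hm
        rw [mem_iList] at hm
        exact horth m (by omega) (by omega) (by omega)
    have hsplit : betaRoot Bf α ii l k
        = wprod Bf α ii l a (refl' Bf (α (ii a)) v) := by
      rw [betaRoot, wprod_eq_lprod, wprod_eq_lprod,
        iList_split l a k ha (le_of_lt h), lprod_append,
        iList_split a (a + 1) k (by omega) (by omega), lprod_append]
      congr 1
      have hone : iList a (a + 1) = [a] := by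
        rw [iList_succ a a le_rfl, iList_nil, List.nil_append]
      rw [hone, lprod_cons]
      show refl' Bf (α (ii a)) (lprod Bf α ii [] _) = _
      rw [lprod_nil]
      rfl
    have e1 : Bf (betaRoot Bf α ii l k) (wprod Bf α ii l a w)
        = - Bf v (α (ii a)) := by
      rw [hsplit, wprod_eq_lprod, lprod_inv Bf α ii hsymm hnorm, refl'_apply,
        map_sub, map_smul, LinearMap.sub_apply, LinearMap.smul_apply, smul_eq_mul,
        hvw, hw, hϖ, if_pos rfl]
      ring
    have e2 : Bf (betaRoot Bf α ii l k) (betaRoot Bf α ii l a)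
        = - Bf v (α (ii a)) := by
      rw [hsplit, betaRoot, wprod_eq_lprod, lprod_inv Bf α ii hsymm hnorm, refl'_apply,
        map_sub, map_smul, LinearMap.sub_apply, LinearMap.smul_apply, smul_eq_mul,
        hnorm]
      ring
    rw [e1, e2]
    ring

end
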